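/- Let R be an integral domain and L, L', L'', C, C', C'' nonzero elements of R satisfying (L·L') = (C·C'), (L·L'') = (C·C''), and (L'·L'') = (C'·C'') as ideals. If moreover R is a UFD, then (L) = (C), (L') = (C'), and (L'') = (C''). -/

import Mathlib

open UniqueFactorizationMonoid in
private lemma assoc_of_sq_assoc {R : Type*} [CommRing R] [IsDomain R]
    [UniqueFactorizationMonoid R] {a b : R} (ha : a ≠ 0) (hb : b ≠ 0)
    (h : Associated (a * a) (b * b)) : Associated a b := by
  letI : NormalizationMonoid R :=
    (UniqueFactorizationMonoid.normalizationMonoid (α := R)).toNormalizationMonoid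
  rw [associated_iff_normalizedFactors_eq_normalizedFactors (mul_ne_zero ha ha)
    (mul_ne_zero hb hb), normalizedFactors_mul ha ha, normalizedFactors_mul hb hb] at h
  rw [associated_iff_normalizedFactors_eq_normalizedFactors ha hb]
  classical
  refine Multiset.ext.2 fun p => ?_
  have := congrArg (Multiset.count p) h
  simp only [Multiset.count_add] at this
  omega

/-- In a UFD, if `(L·L') = (C·C')`, `(L·L'') = (C·C'')` and `(L'·L'') = (C'·C'')` as ideals
(all elements nonzero), then `(L) = (C)`, `(L') = (C')` and `(L'') = (C'')`. -/
theorem separate_factors_of_three_products {R : Type*} [CommRing R] [IsDomain R]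
    [UniqueFactorizationMonoid R]
    (L L' L'' C C' C'' : R)
    (hL : L ≠ 0) (hL' : L' ≠ 0) (hL'' : L'' ≠ 0)
    (hC : C ≠ 0) (hC' : C' ≠ 0) (hC'' : C'' ≠ 0)
    (h1 : Ideal.span {L * L'} = Ideal.span {C * C'})
    (h2 : Ideal.span {L * L''} = Ideal.span {C * C''})
    (h3 : Ideal.span {L' * L''} = Ideal.span {C' * C''}) :
    Ideal.span {L} = Ideal.span {C} ∧ Ideal.span {L'} = Ideal.span {C'} ∧
      Ideal.span {L''} = Ideal.span {C''} := by
  rw [Ideal.span_singleton_eq_span_singleton] at h1 h2 h3 ⊢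
  rw [Ideal.span_singleton_eq_span_singleton]
  rw [Ideal.span_singleton_eq_span_singleton]
  have key : ∀ (a b c x y z : R), a ≠ 0 → b ≠ 0 → c ≠ 0 → x ≠ 0 → y ≠ 0 → z ≠ 0 →
      Associated (a * b) (x * y) → Associated (a * c) (x * z) →
      Associated (b * c) (y * z) → Associated a x := by
    intro a b c x y z ha hb hc hx hy hz hab hac hbc
    have h4 : Associated ((a * a) * (b * c)) ((x * x) * (y * z)) := by
      have h := hab.mul_mul hac
      have e1 : a * a * (b * c) = a * b * (a * c) := by ring
      have e2 : x * x * (y * z) = x * y * (x * z) := by ring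
      rw [e1, e2]; exact h
    have h5 : Associated (a * a) (x * x) :=
      h4.of_mul_right hbc (mul_ne_zero hb hc)
    exact assoc_of_sq_assoc ha hx h5
  refine ⟨key L L' L'' C C' C'' hL hL' hL'' hC hC' hC'' h1 h2 h3,
    key L' L L'' C' C C'' hL' hL hL'' hC' hC hC''
      ((mul_comm L L' ▸ mul_comm C C' ▸ h1)) h3 h2,
    key L'' L L' C'' C C' hL'' hL hL' hC'' hC hC'
      ((mul_comm L L'' ▸ mul_comm C C'' ▸ h2))
      ((mul_comm L' L'' ▸ mul_comm C' C'' ▸ h3)) h1⟩
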